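/- Let ν ≥ 0 be an integer, Π_ν > 0, a_ν > a' > 0 with (a_ν - a')C_J < σ for some σ, C_J > 0, and let j be an integer with |j| > Π_ν. Then for all k ∈ ℤⁿ with max_b |j_b| ≤ C_J, the momentum π(k,-2j) = ∑_b k_b j_b - 2j satisfies |π(k,-2j)| ≥ 2Π_ν - C_J|k| ≥ 2Π_ν - σ|k|/(a_ν - a'), and consequently for any coefficients (R̂_k): ∑_k |R̂_k| e^{|k|(s-σ)} e^{a'|π(k,-2j)|} ≤ e^{-2(a_ν - a')Π_ν} ∑_k |R̂_k| e^{|k|s} e^{a_ν |π(k,-2j)|}. -/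
import Mathlib


/-- Higher-momentum decay estimate (17.10.11.2): if `|j| > Pv`, `|j_b| ≤ C_J`,
`0 < a' < a` and `(a - a')C_J < σ`, then `|π(k,-2j)| ≥ 2Pv - C_J|k| ≥ 2Pv - σ|k|/(a-a')`
and consequently
`∑_k |R̂_k| e^{|k|(s-σ)} e^{a'|π(k,-2j)|} ≤ e^{-2(a-a')Pv} ∑_k |R̂_k| e^{|k|s} e^{a|π(k,-2j)|}`. -/
theorem stmt_15 (n : ℕ) (s σ a a' CJ Pv : ℝ)
    (hσ : 0 < σ) (hσs : σ < s) (ha' : 0 < a') (haa : a' < a)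
    (hCJ : 0 < CJ) (hgap : (a - a') * CJ < σ) (hPv : 0 < Pv)
    (j : ℤ) (hj : Pv < |(j : ℝ)|) (jb : Fin n → ℤ) (hjb : ∀ b, (|jb b| : ℝ) ≤ CJ)
    (R : (Fin n → ℤ) → ℂ)
    (hR : Summable fun k : Fin n → ℤ =>
      ‖R k‖ * Real.exp ((∑ b, |(k b : ℝ)|) * s) *
        Real.exp (a * |∑ b, (k b : ℝ) * (jb b : ℝ) - 2 * (j : ℝ)|)) :
    (∀ k : Fin n → ℤ,
        2 * Pv - CJ * (∑ b, |(k b : ℝ)|) ≤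
            |∑ b, (k b : ℝ) * (jb b : ℝ) - 2 * (j : ℝ)| ∧
          2 * Pv - σ * (∑ b, |(k b : ℝ)|) / (a - a') ≤
            2 * Pv - CJ * (∑ b, |(k b : ℝ)|)) ∧
      ∑' k : Fin n → ℤ,
          ‖R k‖ * Real.exp ((∑ b, |(k b : ℝ)|) * (s - σ)) *
            Real.exp (a' * |∑ b, (k b : ℝ) * (jb b : ℝ) - 2 * (j : ℝ)|) ≤
        Real.exp (-(2 * (a - a') * Pv)) *
          ∑' k : Fin n → ℤ,
            ‖R k‖ * Real.exp ((∑ b, |(k b : ℝ)|) * s) *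
              Real.exp (a * |∑ b, (k b : ℝ) * (jb b : ℝ) - 2 * (j : ℝ)|) := by
  have haa' : 0 < a - a' := sub_pos.mpr haa
  have hKnn : ∀ k : Fin n → ℤ, (0:ℝ) ≤ ∑ b, |(k b : ℝ)| :=
    fun k => Finset.sum_nonneg fun b _ => abs_nonneg _
  have hP : ∀ k : Fin n → ℤ,
      2 * Pv - CJ * (∑ b, |(k b : ℝ)|) ≤
        |∑ b, (k b : ℝ) * (jb b : ℝ) - 2 * (j : ℝ)| := by
    intro k
    have h1 : |∑ b, (k b : ℝ) * (jb b : ℝ)| ≤ CJ * ∑ b, |(k b : ℝ)| := by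
      calc |∑ b, (k b : ℝ) * (jb b : ℝ)| ≤ ∑ b, |(k b : ℝ) * (jb b : ℝ)| :=
            Finset.abs_sum_le_sum_abs _ _
        _ ≤ ∑ b, |(k b : ℝ)| * CJ := Finset.sum_le_sum fun b _ => by
            rw [abs_mul]
            exact mul_le_mul_of_nonneg_left (by exact_mod_cast hjb b) (abs_nonneg _)
        _ = CJ * ∑ b, |(k b : ℝ)| := by rw [← Finset.sum_mul]; ring
    have h2 : |2 * (j:ℝ)| - |∑ b, (k b : ℝ) * (jb b : ℝ)| ≤
        |∑ b, (k b : ℝ) * (jb b : ℝ) - 2 * (j : ℝ)| := by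
      rw [abs_sub_comm]
      exact abs_sub_abs_le_abs_sub _ _
    have h3 : |2 * (j:ℝ)| = 2 * |(j:ℝ)| := by
      rw [abs_mul, abs_two]
    linarith
  have hterm : ∀ k : Fin n → ℤ,
      ‖R k‖ * Real.exp ((∑ b, |(k b : ℝ)|) * (s - σ)) *
          Real.exp (a' * |∑ b, (k b : ℝ) * (jb b : ℝ) - 2 * (j : ℝ)|) ≤
        Real.exp (-(2 * (a - a') * Pv)) *
          (‖R k‖ * Real.exp ((∑ b, |(k b : ℝ)|) * s) *
            Real.exp (a * |∑ b, (k b : ℝ) * (jb b : ℝ) - 2 * (j : ℝ)|)) := by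
    intro k
    set K := ∑ b, |(k b : ℝ)| with hK
    set P := |∑ b, (k b : ℝ) * (jb b : ℝ) - 2 * (j : ℝ)| with hPdef
    have hexp : K * (s - σ) + a' * P ≤ -(2 * (a - a') * Pv) + (K * s + a * P) := by
      have := hP k
      nlinarith [hKnn k, hgap.le, haa'.le]
    calc ‖R k‖ * Real.exp (K * (s - σ)) * Real.exp (a' * P)
        = ‖R k‖ * Real.exp (K * (s - σ) + a' * P) := by
          rw [mul_assoc, ← Real.exp_add]
      _ ≤ ‖R k‖ * Real.exp (-(2 * (a - a') * Pv) + (K * s + a * P)) :=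
          mul_le_mul_of_nonneg_left (Real.exp_le_exp.mpr hexp) (norm_nonneg _)
      _ = Real.exp (-(2 * (a - a') * Pv)) *
            (‖R k‖ * Real.exp (K * s) * Real.exp (a * P)) := by
          rw [Real.exp_add, Real.exp_add]; ring
  refine ⟨fun k => ⟨hP k, ?_⟩, ?_⟩
  · have h : CJ * (∑ b, |(k b : ℝ)|) ≤ σ * (∑ b, |(k b : ℝ)|) / (a - a') := by
      rw [le_div_iff₀ haa']
      nlinarith [hKnn k, hgap.le]
    linarith
  · have hsum' : Summable fun k : Fin n → ℤ =>
        Real.exp (-(2 * (a - a') * Pv)) *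
          (‖R k‖ * Real.exp ((∑ b, |(k b : ℝ)|) * s) *
            Real.exp (a * |∑ b, (k b : ℝ) * (jb b : ℝ) - 2 * (j : ℝ)|)) :=
      hR.mul_left _
    have hf : Summable fun k : Fin n → ℤ =>
        ‖R k‖ * Real.exp ((∑ b, |(k b : ℝ)|) * (s - σ)) *
          Real.exp (a' * |∑ b, (k b : ℝ) * (jb b : ℝ) - 2 * (j : ℝ)|) :=
      Summable.of_nonneg_of_le
        (fun k => by positivity) hterm hsum'
    calc (∑' k : Fin n → ℤ,
          ‖R k‖ * Real.exp ((∑ b, |(k b : ℝ)|) * (s - σ)) *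
            Real.exp (a' * |∑ b, (k b : ℝ) * (jb b : ℝ) - 2 * (j : ℝ)|))
        ≤ ∑' k : Fin n → ℤ,
            Real.exp (-(2 * (a - a') * Pv)) *
              (‖R k‖ * Real.exp ((∑ b, |(k b : ℝ)|) * s) *
                Real.exp (a * |∑ b, (k b : ℝ) * (jb b : ℝ) - 2 * (j : ℝ)|)) :=
          Summable.tsum_le_tsum hterm hf hsum'
      _ = _ := tsum_mul_left
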